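/- (Existence of a Field Stabilizing Controller via a Linear Program.) Let n ≥ 1 and for j ∈ {1,…,n} let β_j : [0,1] → ℝ be the rectangular basis function equal to 1 on [(j−1)/n, j/n) and 0 elsewhere. Let v_min, v_max : [0,1] → ℝ with 0 < v_min(θ) ≤ v_max(θ) for all θ, and set v_max(j) := inf_{θ ∈ [(j−1)/n, j/n)} v_max(θ) and v_min(j) := sup_{θ ∈ [(j−1)/n, j/n)} v_min(θ), assuming v_min(j) and v_max(j) are positive and finite. Let q_1,…,q_m be points of interest with measurable covered-position sets F(q_i) ⊆ [0,1] and rates 0 < p(q_i) < c(q_i), and define K(q_i,β_j) := ∫_{F(q_i)} β_j(θ) dθ − (p(q_i)/c(q_i))·∫_0^1 β_j(θ) dθ. Then the following are equivalent: (a) there exist α_1,…,α_n ∈ ℝ with 1/v_max(j) ≤ α_j ≤ 1/v_min(j) for all j and Σ_{j=1}^n α_j·K(q_i,β_j) > 0 for all i ∈ {1,…,m}; (b) there exists a speed controller v : [0,1] → ℝ of the form 1/v(θ) = Σ_{j=1}^n α_j β_j(θ) for some α ∈ ℝ^n such that v(θ) > 0 and v_min(θ) ≤ v(θ) ≤ v_max(θ)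 for all θ ∈ [0,1], and the stability condition c(q_i)·∫_{F(q_i)} 1/v(θ) dθ > p(q_i)·∫_0^1 1/v(θ) dθ holds for every i ∈ {1,…,m}. -/

import Mathlib

open MeasureTheory Filter Set

/-- The rectangular basis function `β_j`, equal to `1` on the `j`-th cell
`[j/n, (j+1)/n)` of `[0,1)` and `0` elsewhere (here `j : Fin n` corresponds to the
`(j+1)`-st basis function of the paper). -/
noncomputable def rectBasis (n : ℕ) (j : Fin n) : ℝ → ℝ :=
  Set.indicator (Set.Ico ((j : ℝ) / n) (((j : ℝ) + 1) / n)) (fun _ => (1 : ℝ))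

/-- `cellInf n v j = inf` of the speed constraint `v` over the `j`-th cell. -/
noncomputable def cellInf (n : ℕ) (v : ℝ → ℝ) (j : Fin n) : ℝ :=
  sInf (v '' Set.Ico ((j : ℝ) / n) (((j : ℝ) + 1) / n))

/-- `cellSup n v j = sup` of the speed constraint `v` over the `j`-th cell. -/
noncomputable def cellSup (n : ℕ) (v : ℝ → ℝ) (j : Fin n) : ℝ :=
  sSup (v '' Set.Ico ((j : ℝ) / n) (((j : ℝ) + 1) / n))

lemma cell_subset (n : ℕ) (j : Fin n) :
    Set.Ico ((j : ℝ) / n) (((j : ℝ) + 1) / n) ⊆ Set.Ico (0 : ℝ) 1 := by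
  have hn : (0:ℝ) < n := by exact_mod_cast j.pos
  intro y hy
  have h1 : (0:ℝ) ≤ (j:ℝ)/n := by positivity
  have h2 : ((j:ℝ)+1)/n ≤ 1 := by
    rw [div_le_one hn]
    have : (j:ℕ) + 1 ≤ n := j.2
    exact_mod_cast this
  exact ⟨le_trans h1 hy.1, lt_of_lt_of_le hy.2 h2⟩

lemma cell_nonempty (n : ℕ) (j : Fin n) :
    (Set.Ico ((j : ℝ) / n) (((j : ℝ) + 1) / n)).Nonempty := by
  have hn : (0:ℝ) < n := by exact_mod_cast j.pos
  refine Set.nonempty_Ico.2 (div_lt_div_of_pos_right (by linarith) hn)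

lemma cell_exists (n : ℕ) (hn : 1 ≤ n) {x : ℝ} (hx : x ∈ Set.Ico (0:ℝ) 1) :
    ∃ j : Fin n, x ∈ Set.Ico ((j : ℝ) / n) (((j : ℝ) + 1) / n) := by
  have hn' : (0:ℝ) < n := by exact_mod_cast hn
  have hx0 : 0 ≤ x * n := mul_nonneg hx.1 (le_of_lt hn')
  have hlt : ⌊x * n⌋₊ < n := by
    rw [Nat.floor_lt hx0]
    nlinarith [hx.2]
  refine ⟨⟨⌊x * n⌋₊, hlt⟩, ?_, ?_⟩
  · rw [div_le_iff₀ hn']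
    simpa using Nat.floor_le hx0
  · rw [lt_div_iff₀ hn']
    simpa using Nat.lt_floor_add_one (x * n)

lemma cell_unique (n : ℕ) {x : ℝ} {j k : Fin n}
    (hj : x ∈ Set.Ico ((j : ℝ) / n) (((j : ℝ) + 1) / n))
    (hk : x ∈ Set.Ico ((k : ℝ) / n) (((k : ℝ) + 1) / n)) : j = k := by
  have hn : (0:ℝ) < n := by exact_mod_cast j.pos
  have h1 : (j:ℝ) < (k:ℝ) + 1 := by
    have := lt_of_le_of_lt hj.1 hk.2
    rwa [div_lt_div_iff₀ hn hn, mul_lt_mul_iff_of_pos_right hn] at this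
  have h2 : (k:ℝ) < (j:ℝ) + 1 := by
    have := lt_of_le_of_lt hk.1 hj.2
    rwa [div_lt_div_iff₀ hn hn, mul_lt_mul_iff_of_pos_right hn] at this
  have hj' : ((j:ℕ):ℝ) < ((k:ℕ):ℝ) + 1 := h1
  have hk' : ((k:ℕ):ℝ) < ((j:ℕ):ℝ) + 1 := h2
  have a1 : (j:ℕ) < (k:ℕ) + 1 := by exact_mod_cast hj'
  have a2 : (k:ℕ) < (j:ℕ) + 1 := by exact_mod_cast hk'
  exact Fin.ext (by omega)

lemma rect_sum_collapse (n : ℕ) (α : Fin n → ℝ) {x : ℝ} {j₀ : Fin n}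
    (hj₀ : x ∈ Set.Ico ((j₀ : ℝ) / n) (((j₀ : ℝ) + 1) / n)) :
    ∑ j, α j * rectBasis n j x = α j₀ := by
  rw [Finset.sum_eq_single j₀]
  · rw [rectBasis, Set.indicator_of_mem hj₀, mul_one]
  · intro b _ hb
    rw [rectBasis, Set.indicator_of_notMem, mul_zero]
    exact fun hmem => hb (cell_unique n hmem hj₀)
  · exact fun h => absurd (Finset.mem_univ j₀) h

lemma rect_integrable (n : ℕ) (j : Fin n) : Integrable (rectBasis n j) := by
  rw [rectBasis, integrable_indicator_iff measurableSet_Ico]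
  exact integrableOn_const measure_Ico_lt_top.ne

lemma integral_rep (n : ℕ) (α : Fin n → ℝ) (v : ℝ → ℝ)
    (hrep : ∀ x ∈ Set.Ico (0:ℝ) 1, (v x)⁻¹ = ∑ j, α j * rectBasis n j x)
    (S : Set ℝ) (hS : MeasurableSet S) (hsub : S ⊆ Set.Ico (0:ℝ) 1) :
    ∫ x in S, (v x)⁻¹ = ∑ j, α j * ∫ x in S, rectBasis n j x := by
  rw [setIntegral_congr_fun hS (fun x hx => hrep x (hsub hx)),
    integral_finset_sum _ (fun j _ => ((rect_integrable n j).const_mul _).integrableOn)]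
  exact Finset.sum_congr rfl fun j _ => integral_const_mul _ _

lemma integral_rep01 (n : ℕ) (α : Fin n → ℝ) (v : ℝ → ℝ)
    (hrep : ∀ x ∈ Set.Ico (0:ℝ) 1, (v x)⁻¹ = ∑ j, α j * rectBasis n j x) :
    ∫ x in (0:ℝ)..1, (v x)⁻¹ = ∑ j, α j * ∫ x in (0:ℝ)..1, rectBasis n j x := by
  rw [intervalIntegral.integral_of_le (by norm_num : (0:ℝ) ≤ 1),
    integral_Ioc_eq_integral_Ioo,
    integral_rep n α v hrep _ measurableSet_Ioo (Set.Ioo_subset_Ico_self.trans (by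
      intro y hy; exact ⟨hy.1, hy.2⟩))]
  refine Finset.sum_congr rfl fun j _ => ?_
  rw [intervalIntegral.integral_of_le (by norm_num : (0:ℝ) ≤ 1), integral_Ioc_eq_integral_Ioo]

lemma expand_sum (n : ℕ) (α a b : Fin n → ℝ) (r : ℝ) :
    ∑ j, α j * (a j - r * b j) = (∑ j, α j * a j) - r * ∑ j, α j * b j := by
  rw [Finset.mul_sum, ← Finset.sum_sub_distrib]
  exact Finset.sum_congr rfl fun j _ => by ring


/-- Existence of a field stabilizing controller via a linear program:
the LP constraints `1/v_max(j) ≤ α_j ≤ 1/v_min(j)`, `Σ_j α_j K(q_i,β_j) > 0` are feasible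
if and only if there is a speed controller of the form `1/v = Σ_j α_j β_j` respecting the
speed limits and satisfying the stability condition at every point of interest. -/
theorem field_stabilizing_LP (n : ℕ) (hn : 1 ≤ n) (vmin vmax : ℝ → ℝ)
    (hv : ∀ x ∈ Set.Ico (0 : ℝ) 1, 0 < vmin x ∧ vmin x ≤ vmax x)
    (hbdd : ∀ j : Fin n, BddAbove (vmin '' Set.Ico ((j : ℝ) / n) (((j : ℝ) + 1) / n)))
    (hmaxpos : ∀ j : Fin n, 0 < cellInf n vmax j)
    (hminpos : ∀ j : Fin n, 0 < cellSup n vmin j)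
    (m : ℕ) (F : Fin m → Set ℝ) (hFmeas : ∀ i, MeasurableSet (F i))
    (hFsub : ∀ i, F i ⊆ Set.Ico (0 : ℝ) 1)
    (p c : Fin m → ℝ) (hpc : ∀ i, 0 < p i ∧ p i < c i) :
    (∃ α : Fin n → ℝ,
      (∀ j, (cellInf n vmax j)⁻¹ ≤ α j ∧ α j ≤ (cellSup n vmin j)⁻¹) ∧
      (∀ i, 0 < ∑ j, α j *
        ((∫ x in F i, rectBasis n j x) -
          (p i / c i) * ∫ x in (0:ℝ)..1, rectBasis n j x))) ↔
    (∃ v : ℝ → ℝ, ∃ α : Fin n → ℝ,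
      (∀ x ∈ Set.Ico (0 : ℝ) 1, (v x)⁻¹ = ∑ j, α j * rectBasis n j x) ∧
      (∀ x ∈ Set.Ico (0 : ℝ) 1, 0 < v x ∧ vmin x ≤ v x ∧ v x ≤ vmax x) ∧
      (∀ i, p i * ∫ x in (0:ℝ)..1, (v x)⁻¹ < c i * ∫ x in F i, (v x)⁻¹)) := by
  constructor
  · rintro ⟨α, hbound, hK⟩
    set v : ℝ → ℝ := fun x => (∑ j, α j * rectBasis n j x)⁻¹ with hvdef
    have hrep : ∀ x ∈ Set.Ico (0:ℝ) 1, (v x)⁻¹ = ∑ j, α j * rectBasis n j x := by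
      intro x hx
      simp only [hvdef, inv_inv]
    refine ⟨v, α, hrep, ?_, ?_⟩
    · intro x hx
      obtain ⟨j₀, hj₀⟩ := cell_exists n hn hx
      have hs : ∑ j, α j * rectBasis n j x = α j₀ := rect_sum_collapse n α hj₀
      have hαpos : 0 < α j₀ := lt_of_lt_of_le (inv_pos.2 (hmaxpos j₀)) (hbound j₀).1
      have hvx : v x = (α j₀)⁻¹ := by rw [hvdef]; simp only [hs]
      have hbelow : BddBelow (vmax '' Set.Ico ((j₀:ℝ)/n) (((j₀:ℝ)+1)/n)) := by
        refine ⟨0, ?_⟩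
        rintro _ ⟨y, hy, rfl⟩
        have := hv y (cell_subset n j₀ hy)
        linarith [this.1, this.2]
      refine ⟨by rw [hvx]; exact inv_pos.2 hαpos, ?_, ?_⟩
      · have h1 : vmin x ≤ cellSup n vmin j₀ := le_csSup (hbdd j₀) ⟨x, hj₀, rfl⟩
        have h2 : (cellSup n vmin j₀)⁻¹⁻¹ ≤ (α j₀)⁻¹ :=
          inv_anti₀ hαpos (hbound j₀).2
        rw [inv_inv] at h2
        rw [hvx]; linarith
      · have h1 : cellInf n vmax j₀ ≤ vmax x := csInf_le hbelow ⟨x, hj₀, rfl⟩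
        have h2 : (α j₀)⁻¹ ≤ (cellInf n vmax j₀)⁻¹⁻¹ :=
          inv_anti₀ (inv_pos.2 (hmaxpos j₀)) (hbound j₀).1
        rw [inv_inv] at h2
        rw [hvx]; linarith
    · intro i
      have hc : 0 < c i := (hpc i).1.trans (hpc i).2
      rw [integral_rep n α v hrep (F i) (hFmeas i) (hFsub i), integral_rep01 n α v hrep]
      have hK' := hK i
      rw [expand_sum] at hK'
      have he : c i * (p i / c i * ∑ j, α j * ∫ x in (0:ℝ)..1, rectBasis n j x)
          = p i * ∑ j, α j * ∫ x in (0:ℝ)..1, rectBasis n j x := by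
        field_simp
      nlinarith [mul_pos hc hK']
  · rintro ⟨v, α, hrep, hbounds, hstab⟩
    refine ⟨α, ?_, ?_⟩
    · intro j
      have hsub := cell_subset n j
      have key : ∀ x ∈ Set.Ico ((j:ℝ)/n) (((j:ℝ)+1)/n), v x = (α j)⁻¹ := by
        intro x hx
        have h := (hrep x (hsub hx)).trans (rect_sum_collapse n α hx)
        rw [← h, inv_inv]
      obtain ⟨x₀, hx₀⟩ := cell_nonempty n j
      have hv0 : 0 < v x₀ := (hbounds x₀ (hsub hx₀)).1
      have hα : 0 < α j := by
        have h := (hrep x₀ (hsub hx₀)).trans (rect_sum_collapse n α hx₀)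
        rw [← h]; exact inv_pos.2 hv0
      constructor
      · have h1 : (α j)⁻¹ ≤ cellInf n vmax j := by
          apply le_csInf ((cell_nonempty n j).image _)
          rintro _ ⟨x, hx, rfl⟩
          rw [← key x hx]
          exact (hbounds x (hsub hx)).2.2
        have h2 := inv_anti₀ (inv_pos.2 hα) h1
        rwa [inv_inv] at h2
      · have h1 : cellSup n vmin j ≤ (α j)⁻¹ := by
          apply csSup_le ((cell_nonempty n j).image _)
          rintro _ ⟨x, hx, rfl⟩
          rw [← key x hx]
          exact (hbounds x (hsub hx)).2.1
        have h2 := inv_anti₀ (hminpos j) h1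
        rwa [inv_inv] at h2
    · intro i
      have hc : 0 < c i := (hpc i).1.trans (hpc i).2
      have hs := hstab i
      rw [integral_rep n α v hrep (F i) (hFmeas i) (hFsub i), integral_rep01 n α v hrep] at hs
      rw [expand_sum]
      rw [sub_pos, div_mul_eq_mul_div, div_lt_iff₀ hc]
      nlinarith
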